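/- Let d be even and I a maximal totally singular d-dimensional subspace of V = F₂^{2d} (nondegenerate quadratic form of plus type). The set Inv(V, I) of involutions t in the orthogonal group with t trivial on I and on V/I and [V,t] = I is nonempty; more generally, Inv(V,I) is nonempty if and only if d is even. -/

import Mathlib

open Module LinearMap

theorem aux_alt_nondeg_even (K : Type) [Field K] (n : ℕ) :
    ∀ (V : Type) [AddCommGroup V] [Module K V] [FiniteDimensional K V]
      (B : LinearMap.BilinForm K V), LinearMap.BilinForm.IsAlt B → LinearMap.BilinForm.Nondegenerate B →
      Module.finrank K V = n → Even n := by
  induction n using Nat.strong_induction_on with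
  | _ n IH =>
    intro V _ _ _ B hAlt hNd hrank
    rcases Nat.eq_zero_or_pos n with rfl | hn
    · exact Even.zero
    · have hnt : Nontrivial V :=
        Module.nontrivial_of_finrank_pos (R := K) (by omega)
      obtain ⟨x, hx⟩ := exists_ne (0 : V)
      have hxy : ∃ y, B x y ≠ 0 := by
        by_contra h
        push_neg at h
        exact hx (hNd.1 x h)
      obtain ⟨y, hy⟩ := hxy
      have hyx : B y x ≠ 0 := fun h => hy (hAlt.isRefl y x h)
      have hli : LinearIndependent K ![x, y] := by
        rw [LinearIndependent.pair_iff]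
        intro s t hst
        have h1 : B x (s • x + t • y) = 0 := by rw [hst]; simp
        rw [map_add, map_smul, map_smul, hAlt x] at h1
        simp only [smul_eq_mul, mul_zero, zero_add, smul_zero] at h1
        have ht : t = 0 := by
          rcases mul_eq_zero.mp h1 with h | h
          · exact h
          · cases hy h
        subst ht
        simp only [zero_smul, add_zero, smul_eq_zero] at hst
        rcases hst with h | h
        · exact ⟨h, rfl⟩
        · cases hx h
      set U : Submodule K V := Submodule.span K (Set.range ![x, y]) with hU
      have hxU : x ∈ U := Submodule.subset_span ⟨0, rfl⟩
      have hyU : y ∈ U := Submodule.subset_span ⟨1, rfl⟩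
      have hUrank : finrank K U = 2 := by
        rw [hU, finrank_span_eq_card hli]
        simp
      have hUnd : (B.restrict U).Nondegenerate := by
        refine (LinearMap.IsRefl.nondegenerate_iff_separatingLeft (B := B.restrict U) (fun a b h => hAlt.isRefl (a : V) b h)).mpr ?_
        rintro ⟨u, hu⟩ h0
        have hu' : ∃ a b : K, a • x + b • y = u := by
          apply Submodule.mem_span_pair.mp
          have : Set.range ![x, y] = {x, y} := by
            ext z; simp [Fin.exists_fin_two, or_comm]
          rwa [hU, this] at hu
        obtain ⟨a, b, rfl⟩ := hu'
        have h0x := h0 ⟨x, hxU⟩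
        have h0y := h0 ⟨y, hyU⟩
        simp only [LinearMap.BilinForm.restrict_apply, LinearMap.domRestrict_apply, map_add, map_smul,
          LinearMap.add_apply, LinearMap.smul_apply, smul_eq_mul, hAlt x, hAlt y,
          mul_zero, zero_add, add_zero] at h0x h0y
        have hb : b = 0 := by
          rcases mul_eq_zero.mp h0x with h | h
          · exact h
          · cases hyx h
        have ha : a = 0 := by
          rcases mul_eq_zero.mp h0y with h | h
          · exact h
          · cases hy h
        subst ha; subst hb
        simp
      have hrefl := hAlt.isRefl
      have hCompl := LinearMap.BilinForm.isCompl_orthogonal_of_restrict_nondegenerate hrefl hUnd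
      have hOnd : (B.restrict (B.orthogonal U)).Nondegenerate := by
        apply B.nondegenerate_restrict_of_disjoint_orthogonal hrefl
        rw [LinearMap.BilinForm.orthogonal_orthogonal hNd hrefl]
        exact hCompl.disjoint.symm
      have hOalt : (B.restrict (B.orthogonal U)).IsAlt := fun z => hAlt z
      have hOrank : finrank K (B.orthogonal U) = n - 2 := by
        rw [LinearMap.BilinForm.finrank_orthogonal hNd, hrank, hUrank]
      have hn2 : 2 ≤ n := by
        rw [← hrank, ← hUrank]
        exact Submodule.finrank_le U
      have hEven := IH (n - 2) (by omega) (B.orthogonal U) (B.restrict _) hOalt hOnd hOrank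
      obtain ⟨k, hk⟩ := hEven
      exact ⟨k + 1, by omega⟩

set_option maxHeartbeats 1000000 in
/-- Let `V = F₂^(2d)` with a nondegenerate quadratic form of plus type and
`I` a maximal totally singular `d`-dimensional subspace.  The set
`Inv(V, I)` of involutory isometries `t` which are trivial on `I` and on
`V/I` and satisfy `[V,t] = I` is nonempty if and only if `d` is even. -/
theorem inv_V_I_nonempty_iff_even
    (d : ℕ) (hd : 1 ≤ d)
    (Q : QuadraticForm (ZMod 2) (Fin (2 * d) → ZMod 2))
    (hnd : ∀ x, (∀ y, QuadraticMap.polar Q x y = 0) → x = 0)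
    (I : Submodule (ZMod 2) (Fin (2 * d) → ZMod 2))
    (hIdim : Module.finrank (ZMod 2) I = d)
    (hIsing : ∀ x ∈ I, Q x = 0) :
    (∃ t : (Fin (2 * d) → ZMod 2) ≃ₗ[ZMod 2] (Fin (2 * d) → ZMod 2),
        (∀ x, t (t x) = x) ∧
        (∀ x, Q (t x) = Q x) ∧
        (∀ x ∈ I, t x = x) ∧
        (∀ v, t v - v ∈ I) ∧
        LinearMap.range (t.toLinearMap - LinearMap.id) = I) ↔ Even d := by
  constructor
  · intro hex
    classical
    set B : LinearMap.BilinForm (ZMod 2) (Fin (2 * d) → ZMod 2) := QuadraticMap.polarBilin Q with hB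
    have hBapp : ∀ x y : Fin (2 * d) → ZMod 2, B x y = QuadraticMap.polar Q x y := fun x y =>
      QuadraticMap.polarBilin_apply_apply Q x y
    have hBsymm : ∀ x y : Fin (2 * d) → ZMod 2, B x y = B y x := fun x y => by
      rw [hBapp, hBapp, QuadraticMap.polar_comm]
    have hBrefl : B.IsRefl := fun x y h => by rw [hBsymm]; exact h
    have hBnd : B.Nondegenerate := (LinearMap.IsRefl.nondegenerate_iff_separatingLeft hBrefl).mpr fun x h => hnd x fun y => by rw [← hBapp]; exact h y
    have hII : ∀ x ∈ I, ∀ y ∈ I, B x y = 0 := by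
      intro x hx y hy
      rw [hBapp]
      show Q (x + y) - Q x - Q y = 0
      rw [hIsing _ (I.add_mem hx hy), hIsing _ hx, hIsing _ hy]
      ring
    have hV : finrank (ZMod 2) (Fin (2 * d) → ZMod 2) = 2 * d := Module.finrank_fin_fun (ZMod 2)
    have hIorth : B.orthogonal I = I := by
      have hle : I ≤ B.orthogonal I := fun x hx =>
        (LinearMap.BilinForm.mem_orthogonal_iff).mpr fun n hn => hII n hn x hx
      symm
      apply Submodule.eq_of_le_of_finrank_le hle
      rw [LinearMap.BilinForm.finrank_orthogonal hBnd, hV, hIdim]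
      omega
    have hW : finrank (ZMod 2) ((Fin (2 * d) → ZMod 2) ⧸ I) = d := by
      have := Submodule.finrank_quotient_add_finrank I
      rw [hV, hIdim] at this
      omega
    obtain ⟨t, h1, h2, h3, h4, h5⟩ := hex
    set N : (Fin (2 * d) → ZMod 2) →ₗ[ZMod 2] (Fin (2 * d) → ZMod 2) :=
      t.toLinearMap - LinearMap.id with hN
    have hNapp : ∀ v, N v = t v - v := fun v => rfl
    have hNmem : ∀ v, N v ∈ I := by intro v; rw [hNapp]; exact h4 v
    have hN0 : ∀ x ∈ I, N x = 0 := fun x hx => by rw [hNapp, h3 x hx, sub_self]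
    have hpol : ∀ v, B v (N v) = 0 := by
      intro v
      have htv : t v = v + N v := by rw [hNapp, add_sub_cancel]
      have h2v := h2 v
      rw [htv, QuadraticMap.map_add (⇑Q) v (N v), hIsing _ (hNmem v), add_zero] at h2v
      rw [hBapp]
      exact (add_eq_left.mp h2v)
    -- the induced bilinear form
    set β : LinearMap.BilinForm (ZMod 2) (Fin (2 * d) → ZMod 2) := B.compl₂ N with hβ
    have hβapp : ∀ v w, β v w = B v (N w) := fun v w => rfl
    have hβflip : I ≤ ker β.flip := by
      intro w hw
      rw [mem_ker]
      refine LinearMap.ext fun v => ?_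
      show (β v) w = 0
      rw [hβapp, hN0 w hw, map_zero]
    set δ := I.liftQ β.flip hβflip with hδ
    have hδapp : ∀ w v, δ (Submodule.Quotient.mk w) v = β v w := fun w v => rfl
    have hδflip : I ≤ ker δ.flip := by
      intro v hv
      rw [mem_ker]
      refine LinearMap.ext fun w' => ?_
      obtain ⟨w, rfl⟩ := Submodule.Quotient.mk_surjective I w'
      show δ (Submodule.Quotient.mk w) v = 0
      rw [hδapp, hβapp]
      exact hII v hv (N w) (hNmem w)
    set βbar := I.liftQ δ.flip hδflip with hβbar
    have hβbarapp : ∀ v w, βbar (Submodule.Quotient.mk v) (Submodule.Quotient.mk w) = B v (N w) :=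
      fun v w => rfl
    have hβbaralt : LinearMap.BilinForm.IsAlt βbar := by
      intro m
      obtain ⟨v, rfl⟩ := Submodule.Quotient.mk_surjective I m
      rw [hβbarapp]
      exact hpol v
    have hβbarnd : LinearMap.BilinForm.Nondegenerate βbar := by
      refine (LinearMap.IsRefl.nondegenerate_iff_separatingLeft hβbaralt.isRefl).mpr ?_
      intro m hm
      obtain ⟨v, rfl⟩ := Submodule.Quotient.mk_surjective I m
      rw [Submodule.Quotient.mk_eq_zero]
      rw [← hIorth]
      rw [LinearMap.BilinForm.mem_orthogonal_iff]
      intro n hn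
      rw [← h5] at hn
      obtain ⟨w, rfl⟩ := hn
      show B (N w) v = 0
      rw [← hBsymm]
      have := hm (Submodule.Quotient.mk w)
      rwa [hβbarapp] at this
    exact aux_alt_nondeg_even (ZMod 2) d _ βbar hβbaralt hβbarnd hW

  · intro hEven
    classical
    set B : LinearMap.BilinForm (ZMod 2) (Fin (2 * d) → ZMod 2) := QuadraticMap.polarBilin Q with hB
    have hBapp : ∀ x y : Fin (2 * d) → ZMod 2, B x y = QuadraticMap.polar Q x y := fun x y =>
      QuadraticMap.polarBilin_apply_apply Q x y
    have hBsymm : ∀ x y : Fin (2 * d) → ZMod 2, B x y = B y x := fun x y => by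
      rw [hBapp, hBapp, QuadraticMap.polar_comm]
    have hII : ∀ x ∈ I, ∀ y ∈ I, B x y = 0 := by
      intro x hx y hy
      rw [hBapp]
      show Q (x + y) - Q x - Q y = 0
      rw [hIsing _ (I.add_mem hx hy), hIsing _ hx, hIsing _ hy]
      ring
    have hV : finrank (ZMod 2) (Fin (2 * d) → ZMod 2) = 2 * d := Module.finrank_fin_fun (ZMod 2)
    have hW : finrank (ZMod 2) ((Fin (2 * d) → ZMod 2) ⧸ I) = d := by
      have := Submodule.finrank_quotient_add_finrank I
      rw [hV, hIdim] at this
      omega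
    have hz2 : ∀ z : ZMod 2, z + z = 0 := by decide
    have hchar2 : ∀ v : Fin (2 * d) → ZMod 2, v + v = 0 := fun v => by
      rw [← two_smul (ZMod 2) v, show (2 : ZMod 2) = 0 by decide, zero_smul]
    obtain ⟨m, hm⟩ := hEven
    have hm1 : 1 ≤ m := by omega
    haveI : NeZero d := ⟨by omega⟩
    set b : Basis (Fin d) (ZMod 2) ((Fin (2 * d) → ZMod 2) ⧸ I) :=
      Module.finBasisOfFinrankEq (ZMod 2) _ hW with hb
    set c : Fin d := ⟨m, by omega⟩ with hc
    have hcval : (c : Fin d).val = m := rfl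
    have hcc0 : c + c = 0 := by
      apply Fin.ext
      rw [Fin.val_add, hcval, ← hm, Nat.mod_self, Fin.val_zero]
    have hcc : ∀ i : Fin d, i + c + c = i := by
      intro i
      rw [add_assoc, hcc0, add_zero]
    have hc0 : c ≠ 0 := by
      intro h
      have h2 : (c : Fin d).val = 0 := by rw [h]; rfl
      rw [hcval] at h2
      omega
    -- the symplectic form on the quotient
    set ω : ((Fin (2 * d) → ZMod 2) ⧸ I) →ₗ[ZMod 2] Module.Dual (ZMod 2) ((Fin (2 * d) → ZMod 2) ⧸ I) :=
      LinearMap.mk₂ (ZMod 2) (fun x y => ∑ i, b.repr x i * b.repr y (i + c))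
        (fun x₁ x₂ y => by
          simp only [map_add, Finsupp.add_apply, add_mul]
          rw [Finset.sum_add_distrib])
        (fun s x y => by
          simp only [map_smul, Finsupp.smul_apply, smul_eq_mul, Finset.mul_sum, mul_assoc])
        (fun x y₁ y₂ => by
          simp only [map_add, Finsupp.add_apply, mul_add]
          rw [Finset.sum_add_distrib])
        (fun s x y => by
          simp only [map_smul, Finsupp.smul_apply, smul_eq_mul, Finset.mul_sum]
          exact Finset.sum_congr rfl fun i _ => by ring) with hω
    have hωapp : ∀ x y, ω x y = ∑ i, b.repr x i * b.repr y (i + c) := fun x y => rfl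
    have hωsymm : ∀ x y, ω x y = ω y x := by
      intro x y
      rw [hωapp, hωapp]
      apply Fintype.sum_equiv (Equiv.addRight c)
      intro i
      simp only [Equiv.coe_addRight]
      rw [hcc i, mul_comm]
    have hωalt : ∀ x, ω x x = 0 := by
      intro x
      rw [hωapp]
      apply Finset.sum_ninvolution (fun i => i + c)
      · intro a
        rw [hcc a, mul_comm (b.repr x (a + c))]
        exact hz2 _
      · intro a _ h
        exact absurd (by rwa [add_eq_left] at h) hc0
      · intro a; exact Finset.mem_univ _
      · exact hcc
    have hωnd : ∀ x, (∀ y, ω x y = 0) → x = 0 := by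
      intro x hx
      have hcoord : ∀ j, b.repr x (j + c) = 0 := by
        intro j
        have hj := hx (b j)
        rw [hωapp, Basis.repr_self] at hj
        have step : ∀ i : Fin d, (b.repr x) i * (Finsupp.single j (1 : ZMod 2)) (i + c) =
            if i = j + c then b.repr x i else 0 := by
          intro i
          rw [Finsupp.single_apply]
          by_cases h : i = j + c
          · rw [if_pos h, h, hcc, if_pos rfl, mul_one]
          · rw [if_neg h, if_neg, mul_zero]
            intro hcon
            exact h (by rw [hcon, hcc])
        have heq : (∑ i : Fin d, (b.repr x) i * (Finsupp.single j (1 : ZMod 2)) (i + c)) =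
            ∑ i : Fin d, if i = j + c then b.repr x i else 0 :=
          Finset.sum_congr rfl fun i _ => step i
        rw [heq, Finset.sum_ite_eq' Finset.univ (j + c) (fun i => b.repr x i),
          if_pos (Finset.mem_univ _)] at hj
        exact hj
      apply (Basis.forall_coord_eq_zero_iff b).mp
      intro k
      have := hcoord (k + c)
      rwa [hcc] at this
    have hωinj : Function.Injective ω := by
      rw [injective_iff_map_eq_zero]
      intro a ha
      exact hωnd a fun y => by rw [ha]; rfl
    set e1 : ((Fin (2 * d) → ZMod 2) ⧸ I) ≃ₗ[ZMod 2] Module.Dual (ZMod 2) ((Fin (2 * d) → ZMod 2) ⧸ I) :=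
      LinearMap.linearEquivOfInjective ω hωinj (by rw [Subspace.dual_finrank_eq]) with he1
    -- the pairing I ≃ dual of the quotient
    have hP0 : I ≤ ker (B.compl₂ I.subtype) := by
      intro w hw
      rw [mem_ker]
      refine LinearMap.ext fun x => ?_
      show B w ↑x = 0
      exact hII w hw ↑x x.2
    set P := I.liftQ (B.compl₂ I.subtype) hP0 with hP
    set Ψ : I →ₗ[ZMod 2] Module.Dual (ZMod 2) ((Fin (2 * d) → ZMod 2) ⧸ I) := P.flip with hΨ
    have hΨapp : ∀ (x : I) (w : Fin (2 * d) → ZMod 2),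
        Ψ x (Submodule.Quotient.mk w) = B w ↑x := fun x w => rfl
    have hΨinj : Function.Injective Ψ := by
      rw [injective_iff_map_eq_zero]
      intro x hx
      have : (x : Fin (2 * d) → ZMod 2) = 0 := by
        apply hnd
        intro y
        rw [← hBapp, hBsymm]
        have := DFunLike.congr_fun hx (Submodule.Quotient.mk y)
        rwa [hΨapp] at this
      exact Subtype.ext this
    set e2 : I ≃ₗ[ZMod 2] Module.Dual (ZMod 2) ((Fin (2 * d) → ZMod 2) ⧸ I) :=
      LinearMap.linearEquivOfInjective Ψ hΨinj
        (by rw [Subspace.dual_finrank_eq, hIdim, hW]) with he2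
    set Weq := e1.trans e2.symm with hWeq
    set N : (Fin (2 * d) → ZMod 2) →ₗ[ZMod 2] (Fin (2 * d) → ZMod 2) :=
      I.subtype ∘ₗ (Weq.toLinearMap ∘ₗ I.mkQ) with hNdef
    have hNapp : ∀ v, N v = ↑(Weq (Submodule.Quotient.mk v)) := fun v => rfl
    have hNmem : ∀ v, N v ∈ I := fun v => Submodule.coe_mem _
    have hkey : ∀ w v, B w (N v) = ω (Submodule.Quotient.mk w) (Submodule.Quotient.mk v) := by
      intro w v
      have h1 : Ψ (Weq (Submodule.Quotient.mk v)) = ω (Submodule.Quotient.mk v) := by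
        have he2app : ∀ z : I, e2 z = Ψ z := fun z => rfl
        have : e2 (Weq (Submodule.Quotient.mk v)) = e1 (Submodule.Quotient.mk v) := by
          rw [hWeq]
          simp
        rw [← he2app] at *
        rw [this]
        rfl
      rw [hNapp, ← hΨapp, h1, ← hωsymm]
    have hN0 : ∀ x ∈ I, N x = 0 := by
      intro x hx
      rw [hNapp, (Submodule.Quotient.mk_eq_zero I).mpr hx, map_zero]
      rfl
    have hrange : LinearMap.range N = I := by
      apply le_antisymm
      · rintro _ ⟨v, rfl⟩
        exact hNmem v
      · intro x hx
        obtain ⟨w, hw⟩ := Weq.surjective ⟨x, hx⟩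
        obtain ⟨v, rfl⟩ := Submodule.Quotient.mk_surjective I w
        exact ⟨v, by rw [hNapp, hw]⟩
    have hpol : ∀ v, B v (N v) = 0 := fun v => by rw [hkey]; exact hωalt _
    have hNN : ∀ v, N (N v) = 0 := fun v => hN0 _ (hNmem v)
    have hcomp : (LinearMap.id + N) ∘ₗ (LinearMap.id + N) = LinearMap.id := by
      refine LinearMap.ext fun v => ?_
      show (v + N v) + N (v + N v) = v
      rw [map_add, hNN, add_zero, add_assoc, hchar2, add_zero]
    set t := LinearEquiv.ofLinear (LinearMap.id + N) (LinearMap.id + N) hcomp hcomp with ht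
    have htapp : ∀ v, t v = v + N v := fun v => rfl
    refine ⟨t, ?_, ?_, ?_, ?_, ?_⟩
    · intro x
      rw [htapp, htapp, map_add, hNN, add_zero, add_assoc, hchar2, add_zero]
    · intro x
      rw [htapp, QuadraticMap.map_add (⇑Q) x (N x), hIsing _ (hNmem x), add_zero, ← hBapp, hpol,
        add_zero]
    · intro x hx
      rw [htapp, hN0 x hx, add_zero]
    · intro v
      have : t v - v = N v := by rw [htapp, add_sub_cancel_left]
      rw [this]
      exact hNmem v
    · have hts : t.toLinearMap = LinearMap.id + N := rfl
      rw [hts, add_sub_cancel_left]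
      exact hrange
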